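/- Let x, y ~ N(0, I_p) be independent standard Gaussian vectors, w ~ N(0, I_m) independent of both, σ ≥ 0, and B a fixed p×m matrix. Define Ξ = x^T B B^T (x − y) + σ·w^T B^T (x − y). Then E[Ξ] = ‖B‖_F² and Var[Ξ] = 3‖B B^T‖_F² + 2σ²‖B‖_F². -/

import Mathlib

open MeasureTheory ProbabilityTheory Matrix

noncomputable section

namespace St11
open Real Fintype MeasureTheory.Measure
open scoped ENNReal NNReal

def γ : Measure ℝ := gaussianReal 0 1
instance : IsProbabilityMeasure γ := by unfold γ; infer_instance

lemma icongr {f g : ℝ → ℝ} (hf : Integrable f) (h : ∀ x, f x = g x) : Integrable g :=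
  hf.congr (Filter.Eventually.of_forall h)

lemma integral_γ (f : ℝ → ℝ) : ∫ x, f x ∂γ = ∫ x, f x * gaussianPDFReal 0 1 x := by
  rw [γ, gaussianReal_of_var_ne_zero 0 one_ne_zero]
  have h : (gaussianPDF 0 1) = fun x => ((gaussianPDFReal 0 1 x).toNNReal : ℝ≥0∞) := rfl
  rw [h, integral_withDensity_eq_integral_smul ((measurable_gaussianPDFReal 0 1).real_toNNReal)]
  congr 1; ext x
  simp [NNReal.smul_def, Real.coe_toNNReal _ (gaussianPDFReal_nonneg 0 1 x), mul_comm]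

lemma integrable_exp_poly (k : ℕ) : Integrable (fun x : ℝ => x ^ k * rexp (-x ^ 2 / 2)) := by
  have h := integrable_rpow_mul_exp_neg_mul_sq (b := 1/2) (by norm_num) (s := (k : ℝ))
    (lt_of_lt_of_le (by norm_num) (Nat.cast_nonneg k))
  have : (fun x : ℝ => x ^ (k:ℝ) * rexp (-(1/2) * x ^ 2)) = fun x : ℝ => x ^ k * rexp (-x ^ 2 / 2) := by
    funext x; rw [Real.rpow_natCast]; ring_nf
  rwa [this] at h

lemma integrable_pow_γ (k : ℕ) : Integrable (fun x : ℝ => x ^ k) γ := by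
  rw [γ, gaussianReal_of_var_ne_zero 0 one_ne_zero]
  have h : (gaussianPDF 0 1) = fun x => ((gaussianPDFReal 0 1 x).toNNReal : ℝ≥0∞) := rfl
  rw [h, integrable_withDensity_iff_integrable_smul ((measurable_gaussianPDFReal 0 1).real_toNNReal)]
  have : (fun x : ℝ => (gaussianPDFReal 0 1 x).toNNReal • x ^ k)
      = fun x : ℝ => (Real.sqrt (2 * π))⁻¹ * (x ^ k * rexp (-x ^ 2 / 2)) := by
    funext x
    rw [NNReal.smul_def, Real.coe_toNNReal _ (gaussianPDFReal_nonneg 0 1 x), gaussianPDFReal,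
      smul_eq_mul]
    push_cast
    ring_nf
  rw [this]
  exact (integrable_exp_poly k).const_mul _

def J (k : ℕ) : ℝ := ∫ x : ℝ, x ^ k * rexp (-x ^ 2 / 2)

lemma J0 : J 0 = Real.sqrt (2 * π) := by
  have h2 := integral_gaussian (1/2)
  simp only [J, pow_zero, one_mul]
  have h : (fun x : ℝ => rexp (-x ^ 2 / 2)) = fun x : ℝ => rexp (-(1/2) * x ^ 2) := by
    funext x; ring_nf
  rw [h, h2]
  congr 1; ring

lemma hasDeriv_v (x : ℝ) : HasDerivAt (fun x : ℝ => -rexp (-x ^ 2 / 2)) (x * rexp (-x ^ 2 / 2)) x := by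
  have h1 : HasDerivAt (fun x : ℝ => -x ^ 2 / 2) (-x) x := by
    have := (hasDerivAt_pow 2 x).neg.div_const 2
    exact this.congr_deriv (by push_cast; ring)
  have := (h1.exp).neg
  exact this.congr_deriv (by ring)

lemma J1 : J 1 = 0 := by
  have h := integral_mul_deriv_eq_deriv_mul_of_integrable
    (u := fun _ : ℝ => (1:ℝ)) (u' := fun _ => 0)
    (v := fun x : ℝ => -rexp (-x ^ 2 / 2)) (v' := fun x => x * rexp (-x ^ 2 / 2))
    (fun x _ => hasDerivAt_const x 1) (fun x _ => hasDeriv_v x) ?_ ?_ ?_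
  · simpa [J] using h
  · exact icongr (integrable_exp_poly 1) (by intro x; simp only [Pi.mul_def, one_mul, pow_one])
  · exact icongr (integrable_zero _ _ _) (by intro x; simp [Pi.mul_def])
  · exact icongr (integrable_exp_poly 0).neg (by intro x; simp [Pi.mul_def])

lemma Jrec (k : ℕ) : J (k + 2) = (k + 1) * J k := by
  have h := integral_mul_deriv_eq_deriv_mul_of_integrable
    (u := fun x : ℝ => x ^ (k+1)) (u' := fun x => (↑(k+1)) * x ^ k)
    (v := fun x : ℝ => -rexp (-x ^ 2 / 2)) (v' := fun x => x * rexp (-x ^ 2 / 2))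
    (fun x _ => by simpa using hasDerivAt_pow (k+1) x) (fun x _ => hasDeriv_v x) ?_ ?_ ?_
  · have e1 : (∫ x : ℝ, x ^ (k+1) * (x * rexp (-x ^ 2 / 2))) = J (k + 2) := by
      unfold J; congr 1; funext x; ring
    have e2 : (∫ x : ℝ, (↑(k+1) : ℝ) * x ^ k * -rexp (-x ^ 2 / 2)) = -((↑(k+1) : ℝ) * J k) := by
      rw [show (fun x : ℝ => (↑(k+1) : ℝ) * x ^ k * -rexp (-x ^ 2 / 2))
        = fun x : ℝ => (-(↑(k+1) : ℝ)) * (x ^ k * rexp (-x ^ 2 / 2)) from by funext x; ring]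
      rw [integral_const_mul]
      unfold J; ring
    rw [e1, e2] at h
    push_cast at h ⊢
    linarith
  · exact icongr (integrable_exp_poly (k+2)) (by intro x; simp only [Pi.mul_def]; ring)
  · exact icongr ((integrable_exp_poly k).const_mul (-(↑(k+1) : ℝ)))
      (by intro x; simp only [Pi.mul_def]; push_cast; ring)
  · exact icongr ((integrable_exp_poly (k+1)).const_mul (-1))
      (by intro x; simp only [Pi.mul_def]; push_cast; ring)

def M (k : ℕ) : ℝ := ∫ x, x ^ k ∂γ

lemma M_eq (k : ℕ) : M k = (Real.sqrt (2 * π))⁻¹ * J k := by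
  rw [M, integral_γ]
  rw [show (fun x : ℝ => x ^ k * gaussianPDFReal 0 1 x)
      = fun x : ℝ => (Real.sqrt (2 * π))⁻¹ * (x ^ k * rexp (-x ^ 2 / 2)) from by
    funext x; rw [gaussianPDFReal]; push_cast; ring_nf]
  rw [integral_const_mul, J]

lemma sqrt2pi_pos : (0:ℝ) < Real.sqrt (2 * π) := Real.sqrt_pos.2 (by positivity)

lemma M0 : M 0 = 1 := by rw [M_eq, J0, inv_mul_cancel₀ sqrt2pi_pos.ne']
lemma M1 : M 1 = 0 := by rw [M_eq, J1]; ring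
lemma M2 : M 2 = 1 := by
  rw [M_eq, show (2:ℕ) = 0 + 2 from rfl, Jrec, J0]
  have := sqrt2pi_pos.ne'
  push_cast; field_simp
  norm_num
lemma M3 : M 3 = 0 := by rw [M_eq, show (3:ℕ) = 1 + 2 from rfl, Jrec, J1]; ring
lemma M4 : M 4 = 3 := by
  rw [M_eq, show (4:ℕ) = 2 + 2 from rfl, Jrec, show J 2 = J (0 + 2) from rfl, Jrec, J0]
  have := sqrt2pi_pos.ne'
  field_simp; ring

theorem integrable_pi_prod {n : ℕ} (μ : Fin n → Measure ℝ) [∀ i, SigmaFinite (μ i)]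
    {f : Fin n → ℝ → ℝ} (hf : ∀ i, Integrable (f i) (μ i)) :
    Integrable (fun x : Fin n → ℝ => ∏ i, f i (x i)) (Measure.pi μ) := by
  induction n with
  | zero => simp only [Finset.univ_eq_empty, Finset.prod_empty,
      integrable_const_iff, Measure.pi_empty_univ, ENNReal.one_lt_top, or_true, one_ne_zero,
      false_or]; exact ⟨by rw [Measure.pi_empty_univ]; exact ENNReal.one_lt_top⟩
  | succ n n_ih =>
      have := ((measurePreserving_piFinSuccAbove μ 0).symm)
      rw [← this.integrable_comp_emb (MeasurableEquiv.measurableEmbedding _)]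
      simp_rw [MeasurableEquiv.piFinSuccAbove_symm_apply, Fin.insertNthEquiv,
        Fin.prod_univ_succ, Fin.insertNth_zero]
      simp only [Fin.zero_succAbove, Function.comp_def, Fin.cons_zero, Fin.cons_succ,
        Equiv.coe_fn_mk, cast_eq]
      exact Integrable.mul_prod (hf 0) (n_ih (fun j => μ j.succ) (fun i ↦ hf _))

theorem integral_pi_prod {n : ℕ} (μ : Fin n → Measure ℝ) [∀ i, SigmaFinite (μ i)]
    (f : Fin n → ℝ → ℝ) :
    ∫ x : Fin n → ℝ, ∏ i, f i (x i) ∂Measure.pi μ = ∏ i, ∫ x, f i x ∂μ i := by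
  induction n with
  | zero =>
      simp only [Finset.univ_eq_empty, Finset.prod_empty, integral_const,
        Measure.pi_empty_univ, ENNReal.toReal_one, measureReal_def, smul_eq_mul, mul_one, one_smul]
  | succ n n_ih =>
      calc
        _ = ∫ x : ℝ × (Fin n → ℝ),
            f 0 x.1 * ∏ i : Fin n, f (Fin.succ i) (x.2 i) ∂(μ 0).prod
              (Measure.pi fun j => μ (Fin.succ j)) := by
          rw [← ((measurePreserving_piFinSuccAbove μ 0).symm).integral_comp']
          simp_rw [MeasurableEquiv.piFinSuccAbove_symm_apply, Fin.insertNthEquiv,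
            Fin.prod_univ_succ, Fin.insertNth_zero, Equiv.coe_fn_mk, Fin.cons_succ,
            Fin.zero_succAbove, Fin.cons_zero, cast_eq]
        _ = (∫ x, f 0 x ∂μ 0) * ∏ i : Fin n, ∫ x, f (Fin.succ i) x ∂μ (Fin.succ i) := by
          rw [← n_ih, ← integral_prod_mul]
        _ = ∏ i, ∫ x, f i x ∂μ i := by rw [Fin.prod_univ_succ]

def IP {n : ℕ} (e : Fin n → ℕ) : ℝ := ∏ t, M (e t)
def e1 {n : ℕ} (i : Fin n) : Fin n → ℕ := fun t => if t = i then 1 else 0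

variable {n : ℕ}

lemma M_odd {k : ℕ} (h : k = 1 ∨ k = 3) : M k = 0 := by rcases h with h | h <;> simp [h, M1, M3]

lemma IP_zero_of (e : Fin n → ℕ) (t0 : Fin n) (h : e t0 = 1 ∨ e t0 = 3) : IP e = 0 :=
  Finset.prod_eq_zero (Finset.mem_univ t0) (M_odd h)

lemma IP_zero : IP (0 : Fin n → ℕ) = 1 := by
  refine Finset.prod_eq_one fun t _ => ?_; simp [M0]

lemma IP_e1 (i : Fin n) : IP (e1 i) = 0 := IP_zero_of _ i (Or.inl (by simp [e1]))

lemma IP_2 (i j : Fin n) : IP (e1 i + e1 j) = if i = j then 1 else 0 := by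
  by_cases h : i = j
  · subst h
    rw [if_pos rfl]
    refine Finset.prod_eq_one fun t _ => ?_
    by_cases ht : t = i <;> simp [e1, ht, M2, M0]
  · rw [if_neg h]
    exact IP_zero_of _ i (Or.inl (by simp [e1, h]))

lemma IP_3 (a b c : Fin n) : IP (e1 a + e1 b + e1 c) = 0 := by
  by_cases hab : a = b
  · subst hab
    by_cases hac : a = c
    · subst hac; exact IP_zero_of _ a (Or.inr (by simp [e1]))
    · exact IP_zero_of _ c (Or.inl (by simp [e1, Ne.symm hac]))
  · by_cases hac : a = c
    · subst hac; exact IP_zero_of _ b (Or.inl (by simp [e1, Ne.symm hab]))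
    · exact IP_zero_of _ a (Or.inl (by simp [e1, hab, hac]))

lemma IP_3' (a b c : Fin n) : IP (e1 c + (e1 a + e1 b)) = 0 := by
  rw [show e1 c + (e1 a + e1 b) = e1 a + e1 b + e1 c from by funext t; simp only [Pi.add_apply]; ring]
  exact IP_3 a b c

lemma IP22 (a b : Fin n) (hab : a ≠ b) : IP (e1 a + e1 a + (e1 b + e1 b)) = 1 := by
  refine Finset.prod_eq_one fun t _ => ?_
  by_cases ha : t = a <;> by_cases hb : t = b
  · exact absurd (ha.symm.trans hb) hab
  all_goals simp [e1, ha, hb, hab, Ne.symm hab, M2, M0]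

lemma IP4all (a : Fin n) : IP (e1 a + e1 a + (e1 a + e1 a)) = 3 := by
  rw [IP, Finset.prod_congr rfl (fun t _ => show M ((e1 a + e1 a + (e1 a + e1 a)) t)
    = if t = a then 3 else 1 from by by_cases h : t = a <;> simp [e1, h, M4, M0])]
  simp

lemma IP_4 (i j k l : Fin n) : IP (e1 i + e1 j + (e1 k + e1 l)) =
    (if i = j then (1:ℝ) else 0) * (if k = l then 1 else 0)
    + (if i = k then (1:ℝ) else 0) * (if j = l then 1 else 0)
    + (if i = l then (1:ℝ) else 0) * (if j = k then 1 else 0) := by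
  by_cases hij : i = j
  · subst hij
    by_cases hik : i = k
    · subst hik
      by_cases hil : i = l
      · subst hil; rw [IP4all]; norm_num
      · rw [IP_zero_of _ l (Or.inl (by simp [e1, Ne.symm hil]))]; simp [hil]
    · by_cases hkl : k = l
      · subst hkl; rw [IP22 i k hik]; simp [hik]
      · by_cases hil : i = l
        · subst hil
          rw [IP_zero_of _ k (Or.inl (by simp [e1, Ne.symm hik, hkl]))]; simp [hik, hkl]
        · rw [IP_zero_of _ k (Or.inl (by simp [e1, Ne.symm hik, hkl]))]; simp [hik, hil, hkl]
  · by_cases hik : i = k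
    · subst hik
      by_cases hjl : j = l
      · subst hjl
        rw [show e1 i + e1 j + (e1 i + e1 j) = e1 i + e1 i + (e1 j + e1 j) from by
          funext t; simp only [Pi.add_apply]; ring, IP22 i j (fun h => hij h)]
        simp [hij]
      · rw [IP_zero_of _ j (Or.inl (by simp [e1, Ne.symm hij, hjl]))]; simp [hij, hjl, Ne.symm hij]
    · by_cases hil : i = l
      · subst hil
        by_cases hjk : j = k
        · subst hjk
          rw [show e1 i + e1 j + (e1 j + e1 i) = e1 i + e1 i + (e1 j + e1 j) from by
            funext t; simp only [Pi.add_apply]; ring, IP22 i j (fun h => hij h)]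
          simp [hij, hik]
        · rw [IP_zero_of _ j (Or.inl (by simp [e1, Ne.symm hij, hjk]))]; simp [hij, hik, hjk]
      · rw [IP_zero_of _ i (Or.inl (by simp [e1, hij, hik, hil]))]; simp [hij, hik, hil]

def ν (n : ℕ) : Measure (Fin n → ℝ) := Measure.pi fun _ : Fin n => γ
instance (n : ℕ) : IsProbabilityMeasure (ν n) := by unfold ν; infer_instance

def P {n : ℕ} (e : Fin n → ℕ) (x : Fin n → ℝ) : ℝ := ∏ t, x t ^ e t

lemma integrable_P (e : Fin n → ℕ) : Integrable (P e) (ν n) :=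
  integrable_pi_prod _ (fun i => integrable_pow_γ (e i))

lemma integral_P (e : Fin n → ℕ) : ∫ x, P e x ∂(ν n) = IP e := by
  have := integral_pi_prod (fun _ : Fin n => γ) (fun i u => u ^ e i)
  rw [show (∫ x, P e x ∂ν n) = ∫ x : Fin n → ℝ, ∏ i, x i ^ e i ∂Measure.pi (fun _ => γ) from rfl,
    this, IP]
  rfl

lemma P_add (a b : Fin n → ℕ) (x : Fin n → ℝ) : P (a + b) x = P a x * P b x := by
  simp [P, pow_add, Finset.prod_mul_distrib]

lemma P_e1 (i : Fin n) (x : Fin n → ℝ) : P (e1 i) x = x i := by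
  simp [P, e1, pow_ite]

lemma P_z (x : Fin n → ℝ) : P (0 : Fin n → ℕ) x = 1 := by simp [P]

section Prod
variable {p m : ℕ}

def μ0 (p m : ℕ) : Measure ((Fin p → ℝ) × (Fin p → ℝ) × (Fin m → ℝ)) :=
  (ν p).prod ((ν p).prod (ν m))

lemma integrable_sep (eF eG : Fin p → ℕ) (eH : Fin m → ℕ) :
    Integrable (fun z : (Fin p → ℝ) × (Fin p → ℝ) × (Fin m → ℝ) =>
      P eF z.1 * (P eG z.2.1 * P eH z.2.2)) (μ0 p m) :=
  (integrable_P eF).mul_prod ((integrable_P eG).mul_prod (integrable_P eH))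

lemma integral_sep (eF eG : Fin p → ℕ) (eH : Fin m → ℕ) :
    ∫ z, P eF z.1 * (P eG z.2.1 * P eH z.2.2) ∂(μ0 p m) = IP eF * (IP eG * IP eH) := by
  have h1 : ∫ z, P eF z.1 * (P eG z.2.1 * P eH z.2.2) ∂(μ0 p m)
      = (∫ x, P eF x ∂ν p) * ∫ w, P eG w.1 * P eH w.2 ∂(ν p).prod (ν m) :=
    integral_prod_mul (f := P eF) (g := fun w : (Fin p → ℝ) × (Fin m → ℝ) => P eG w.1 * P eH w.2)
  rw [h1, integral_prod_mul (f := P eG) (g := P eH), integral_P, integral_P, integral_P]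

variable {κ : Type*} [Fintype κ]

lemma integrable_SUM (c : κ → ℝ) (eF eG : κ → Fin p → ℕ) (eH : κ → Fin m → ℕ) :
    Integrable (fun z : (Fin p → ℝ) × (Fin p → ℝ) × (Fin m → ℝ) =>
      ∑ q, c q * (P (eF q) z.1 * (P (eG q) z.2.1 * P (eH q) z.2.2))) (μ0 p m) := by
  apply integrable_finset_sum
  intro q _
  exact (integrable_sep _ _ _).const_mul (c q)

lemma integral_SUM (c : κ → ℝ) (eF eG : κ → Fin p → ℕ) (eH : κ → Fin m → ℕ) :
    ∫ z, (∑ q, c q * (P (eF q) z.1 * (P (eG q) z.2.1 * P (eH q) z.2.2))) ∂(μ0 p m)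
      = ∑ q, c q * (IP (eF q) * (IP (eG q) * IP (eH q))) := by
  rw [integral_finset_sum _ (fun q _ => (integrable_sep (eF q) (eG q) (eH q)).const_mul (c q))]
  exact Finset.sum_congr rfl fun q _ => by rw [integral_const_mul, integral_sep]

def idx (p m : ℕ) :=
  (Fin p × Fin p) ⊕ ((Fin p × Fin p) ⊕ ((Fin m × Fin p) ⊕ (Fin m × Fin p)))
instance (p m : ℕ) : Fintype (idx p m) := by unfold idx; infer_instance

def cc (B : Matrix (Fin p) (Fin m) ℝ) (σ : ℝ) : idx p m → ℝ :=
  Sum.elim (fun q => (B * Bᵀ) q.1 q.2)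
    (Sum.elim (fun q => -((B * Bᵀ) q.1 q.2))
      (Sum.elim (fun q => σ * B q.2 q.1) (fun q => -(σ * B q.2 q.1))))
def eFF : idx p m → Fin p → ℕ :=
  Sum.elim (fun q => e1 q.1 + e1 q.2)
    (Sum.elim (fun q => e1 q.1) (Sum.elim (fun q => e1 q.2) (fun _ => (0 : Fin p → ℕ))))
def eGG : idx p m → Fin p → ℕ :=
  Sum.elim (fun _ => (0 : Fin p → ℕ))
    (Sum.elim (fun q => e1 q.2) (Sum.elim (fun _ => (0 : Fin p → ℕ)) (fun q => e1 q.2)))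
def eHH : idx p m → Fin m → ℕ :=
  Sum.elim (fun _ => (0 : Fin m → ℕ))
    (Sum.elim (fun _ => (0 : Fin m → ℕ)) (Sum.elim (fun q => e1 q.1) (fun q => e1 q.1)))

lemma key (B : Matrix (Fin p) (Fin m) ℝ) (σ : ℝ)
    (z : (Fin p → ℝ) × (Fin p → ℝ) × (Fin m → ℝ)) :
    z.1 ⬝ᵥ (B * Bᵀ).mulVec (z.1 - z.2.1) + σ * (z.2.2 ⬝ᵥ Bᵀ.mulVec (z.1 - z.2.1))
    = ∑ q : idx p m, cc B σ q * (P (eFF q) z.1 * (P (eGG q) z.2.1 * P (eHH q) z.2.2)) := by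
  simp only [idx, Fintype.sum_sum_type, Fintype.sum_prod_type, cc, eFF, eGG, eHH,
    Sum.elim_inl, Sum.elim_inr, P_add, P_e1, P_z, mul_one, one_mul,
    dotProduct, mulVec, Pi.sub_apply, transpose_apply, Finset.mul_sum, mul_sub]
  simp only [Finset.sum_sub_distrib, neg_mul, Finset.sum_neg_distrib]
  have c1 : ∑ x : Fin p, ∑ y : Fin p, (B * Bᵀ) x y * (z.1 x * z.1 y)
      = ∑ x : Fin p, ∑ y : Fin p, z.1 x * ((B * Bᵀ) x y * z.1 y) :=
    Finset.sum_congr rfl fun a _ => Finset.sum_congr rfl fun b _ => by ring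
  have c2 : ∑ x : Fin p, ∑ y : Fin p, (B * Bᵀ) x y * (z.1 x * z.2.1 y)
      = ∑ x : Fin p, ∑ y : Fin p, z.1 x * ((B * Bᵀ) x y * z.2.1 y) :=
    Finset.sum_congr rfl fun a _ => Finset.sum_congr rfl fun b _ => by ring
  have c3 : ∑ x : Fin m, ∑ y : Fin p, σ * B y x * (z.1 y * z.2.2 x)
      = ∑ x : Fin m, ∑ y : Fin p, σ * (z.2.2 x * (B y x * z.1 y)) :=
    Finset.sum_congr rfl fun a _ => Finset.sum_congr rfl fun b _ => by ring
  have c4 : ∑ x : Fin m, ∑ y : Fin p, σ * B y x * (z.2.1 y * z.2.2 x)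
      = ∑ x : Fin m, ∑ y : Fin p, σ * (z.2.2 x * (B y x * z.2.1 y)) :=
    Finset.sum_congr rfl fun a _ => Finset.sum_congr rfl fun b _ => by ring
  rw [c1, c2, c3, c4]
  ring

lemma key2 (B : Matrix (Fin p) (Fin m) ℝ) (σ : ℝ)
    (z : (Fin p → ℝ) × (Fin p → ℝ) × (Fin m → ℝ)) :
    (∑ q : idx p m, cc B σ q * (P (eFF q) z.1 * (P (eGG q) z.2.1 * P (eHH q) z.2.2))) ^ 2
    = ∑ qr : idx p m × idx p m, (cc B σ qr.1 * cc B σ qr.2) *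
        (P (eFF qr.1 + eFF qr.2) z.1 *
          (P (eGG qr.1 + eGG qr.2) z.2.1 * P (eHH qr.1 + eHH qr.2) z.2.2)) := by
  rw [sq, Finset.sum_mul_sum, Fintype.sum_prod_type]
  refine Finset.sum_congr rfl fun q _ => Finset.sum_congr rfl fun r _ => ?_
  simp only [P_add]
  ring

lemma Emean (B : Matrix (Fin p) (Fin m) ℝ) (σ : ℝ) :
    ∑ q : idx p m, cc B σ q * (IP (eFF q) * (IP (eGG q) * IP (eHH q)))
      = ∑ i, (B * Bᵀ) i i := by
  simp only [idx, Fintype.sum_sum_type, Fintype.sum_prod_type, cc, eFF, eGG, eHH,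
    Sum.elim_inl, Sum.elim_inr, IP_zero, IP_e1, IP_2, mul_one, one_mul, mul_zero, zero_mul,
    Finset.sum_const_zero, add_zero, zero_add, mul_ite]
  simp [Finset.sum_ite_eq]

lemma Esq (B : Matrix (Fin p) (Fin m) ℝ) (σ : ℝ) :
    ∑ qr : idx p m × idx p m, (cc B σ qr.1 * cc B σ qr.2) *
        (IP (eFF qr.1 + eFF qr.2) * (IP (eGG qr.1 + eGG qr.2) * IP (eHH qr.1 + eHH qr.2)))
    = (∑ i, (B * Bᵀ) i i) ^ 2 + 3 * (∑ i, ∑ j, (B * Bᵀ) i j ^ 2)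
      + 2 * σ ^ 2 * (∑ i, ∑ j, B i j ^ 2) := by
  rw [Fintype.sum_prod_type]
  simp only [idx, Fintype.sum_prod_type, Fintype.sum_sum_type, cc, eFF, eGG, eHH,
    Sum.elim_inl, Sum.elim_inr, add_zero, zero_add, IP_zero, IP_e1, IP_2, IP_3, IP_3', IP_4,
    mul_one, one_mul, mul_zero, zero_mul, Finset.sum_const_zero]
  simp only [mul_add, Finset.sum_add_distrib, mul_ite, ite_mul, mul_zero, zero_mul, mul_one,
    one_mul, neg_mul, mul_neg, neg_neg, Finset.sum_ite_eq, Finset.sum_ite_eq', Finset.mem_univ,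
    if_true, Finset.sum_ite_irrel, Finset.sum_const_zero]
  have hsym : ∀ i j : Fin p, (B * Bᵀ) i j = (B * Bᵀ) j i := fun i j => by
    simp [Matrix.mul_apply, mul_comm]
  have h1 : ∑ x : Fin p, ∑ y : Fin p, (B * Bᵀ) x x * (B * Bᵀ) y y
      = (∑ i, (B * Bᵀ) i i) ^ 2 := by rw [sq, Finset.sum_mul_sum]
  have h2 : ∑ x : Fin p, ∑ y : Fin p, (B * Bᵀ) x y * (B * Bᵀ) y x
      = ∑ x : Fin p, ∑ y : Fin p, (B * Bᵀ) x y ^ 2 :=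
    Finset.sum_congr rfl fun x _ => Finset.sum_congr rfl fun y _ => by
      rw [← hsym x y, sq]
  have h4 : ∑ x : Fin p, ∑ y : Fin p, (B * Bᵀ) x y * (B * Bᵀ) x y
      = ∑ x : Fin p, ∑ y : Fin p, (B * Bᵀ) x y ^ 2 :=
    Finset.sum_congr rfl fun x _ => Finset.sum_congr rfl fun y _ => (sq _).symm
  have h3 : ∑ x : Fin m, ∑ y : Fin p, σ * B y x * (σ * B y x)
      = σ ^ 2 * ∑ i : Fin p, ∑ j : Fin m, B i j ^ 2 := by
    rw [Finset.sum_comm, Finset.mul_sum]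
    exact Finset.sum_congr rfl fun x _ => by
      rw [Finset.mul_sum]
      exact Finset.sum_congr rfl fun y _ => by ring
  rw [h1, h2, h3, h4]
  ring

lemma trace_eq (B : Matrix (Fin p) (Fin m) ℝ) :
    ∑ i, (B * Bᵀ) i i = ∑ i, ∑ j, B i j ^ 2 := by
  refine Finset.sum_congr rfl fun i _ => ?_
  rw [Matrix.mul_apply]
  exact Finset.sum_congr rfl fun j _ => by rw [Matrix.transpose_apply, sq]

end Prod
end St11

set_option maxHeartbeats 1000000 in
theorem statement11 (p m : ℕ) (B : Matrix (Fin p) (Fin m) ℝ) (σ : ℝ) (hσ : 0 ≤ σ)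
    (μ : Measure ((Fin p → ℝ) × (Fin p → ℝ) × (Fin m → ℝ)))
    (hμ : μ = (Measure.pi fun _ : Fin p => gaussianReal 0 1).prod
      ((Measure.pi fun _ : Fin p => gaussianReal 0 1).prod
        (Measure.pi fun _ : Fin m => gaussianReal 0 1)))
    (Ξ : (Fin p → ℝ) × (Fin p → ℝ) × (Fin m → ℝ) → ℝ)
    (hΞ : ∀ z, Ξ z = z.1 ⬝ᵥ (B * Bᵀ).mulVec (z.1 - z.2.1)
      + σ * (z.2.2 ⬝ᵥ Bᵀ.mulVec (z.1 - z.2.1))) :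
    (∫ z, Ξ z ∂μ = ∑ i, ∑ j, B i j ^ 2) ∧
    (∫ z, Ξ z ^ 2 ∂μ) - (∫ z, Ξ z ∂μ) ^ 2
      = 3 * (∑ i, ∑ j, (B * Bᵀ) i j ^ 2) + 2 * σ ^ 2 * ∑ i, ∑ j, B i j ^ 2 := by
  have hm : μ = St11.μ0 p m := by rw [hμ]; rfl
  have hΞf : ∀ z, Ξ z = ∑ q : St11.idx p m, St11.cc B σ q *
      (St11.P (St11.eFF q) z.1 * (St11.P (St11.eGG q) z.2.1 * St11.P (St11.eHH q) z.2.2)) :=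
    fun z => by rw [hΞ z]; exact St11.key B σ z
  have hmean : ∫ z, Ξ z ∂μ = ∑ i, ∑ j, B i j ^ 2 := by
    rw [hm]
    calc ∫ z, Ξ z ∂St11.μ0 p m
        = ∫ z, (∑ q : St11.idx p m, St11.cc B σ q *
            (St11.P (St11.eFF q) z.1 *
              (St11.P (St11.eGG q) z.2.1 * St11.P (St11.eHH q) z.2.2))) ∂St11.μ0 p m := by
          congr 1; funext z; exact hΞf z
      _ = ∑ q : St11.idx p m, St11.cc B σ q *
            (St11.IP (St11.eFF q) * (St11.IP (St11.eGG q) * St11.IP (St11.eHH q))) :=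
          St11.integral_SUM (St11.cc B σ) St11.eFF St11.eGG St11.eHH
      _ = ∑ i, (B * Bᵀ) i i := St11.Emean B σ
      _ = ∑ i, ∑ j, B i j ^ 2 := St11.trace_eq B
  refine ⟨hmean, ?_⟩
  have hsq : ∫ z, Ξ z ^ 2 ∂μ = (∑ i, (B * Bᵀ) i i) ^ 2 + 3 * (∑ i, ∑ j, (B * Bᵀ) i j ^ 2)
      + 2 * σ ^ 2 * (∑ i, ∑ j, B i j ^ 2) := by
    rw [hm]
    calc ∫ z, Ξ z ^ 2 ∂St11.μ0 p m
        = ∫ z, (∑ qr : St11.idx p m × St11.idx p m, (St11.cc B σ qr.1 * St11.cc B σ qr.2) *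
            (St11.P (St11.eFF qr.1 + St11.eFF qr.2) z.1 *
              (St11.P (St11.eGG qr.1 + St11.eGG qr.2) z.2.1 *
                St11.P (St11.eHH qr.1 + St11.eHH qr.2) z.2.2))) ∂St11.μ0 p m := by
          congr 1; funext z; rw [hΞf z]; exact St11.key2 B σ z
      _ = ∑ qr : St11.idx p m × St11.idx p m, (St11.cc B σ qr.1 * St11.cc B σ qr.2) *
            (St11.IP (St11.eFF qr.1 + St11.eFF qr.2) *
              (St11.IP (St11.eGG qr.1 + St11.eGG qr.2) *
                St11.IP (St11.eHH qr.1 + St11.eHH qr.2))) :=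
          St11.integral_SUM (fun qr : St11.idx p m × St11.idx p m => St11.cc B σ qr.1 * St11.cc B σ qr.2)
            (fun qr : St11.idx p m × St11.idx p m => St11.eFF qr.1 + St11.eFF qr.2)
            (fun qr : St11.idx p m × St11.idx p m => St11.eGG qr.1 + St11.eGG qr.2)
            (fun qr : St11.idx p m × St11.idx p m => St11.eHH qr.1 + St11.eHH qr.2)
      _ = _ := St11.Esq B σ
  rw [hmean, hsq, St11.trace_eq B]
  ring
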